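/- Consider λ = √(s/k) in the corrupted-measurements decoder: let 1 ≤ s ≤ N, 1 ≤ k ≤ m ≤ N, and suppose A ∈ ℂ^{m×N} satisfies the Restricted Isometry Property for the sparse corruptions problem of order (2s, 2k) with constant δ_{2s,2k} < √(8/33). Then there exist constants C₁, C₂ > 0 depending only on δ_{2s,2k} such that: for any x ∈ ℂ^N, c ∈ ℂ^m, y ∈ ℂ^m and ε > 0 with ‖Ax + c − y‖₂ ≤ ε, and any minimizer (x̂, ĉ) of ‖z‖₁ + √(s/k)·‖d‖₁ over pairs (z,d) subject to ‖Az + d − y‖₂ ≤ ε, one has ‖x − x̂‖₁ + √(s/k)·‖c − ĉ‖₁ ≤ C₁·(σ_s(x)₁ + √(s/k)·σ_k(c)₁) + C₂·√(2s)·ε. -/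

import Mathlib

open Finset Matrix MeasureTheory

noncomputable def l1norm {n : ℕ} (x : Fin n → ℂ) : ℝ := ∑ i, ‖x i‖

noncomputable def l2norm {n : ℕ} (x : Fin n → ℂ) : ℝ := Real.sqrt (∑ i, ‖x i‖ ^ 2)

/-- The vector equal to `x` on `S` and zero elsewhere. -/
def restr {n : ℕ} (x : Fin n → ℂ) (S : Finset (Fin n)) : Fin n → ℂ :=
  fun i => if i ∈ S then x i else 0

/-- `x` has at most `s` nonzero entries. -/
def IsSparse {n : ℕ} (s : ℕ) (x : Fin n → ℂ) : Prop :=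
  ∃ S : Finset (Fin n), S.card ≤ s ∧ ∀ i ∉ S, x i = 0

/-- Best `s`-term approximation error of `x` in the `ℓ¹` norm. -/
noncomputable def sigma1 {n : ℕ} (s : ℕ) (x : Fin n → ℂ) : ℝ :=
  sInf {t : ℝ | ∃ z : Fin n → ℂ, IsSparse s z ∧ t = l1norm (x - z)}

/-- `η_{s,k}(λ) = (s + λ²k)/min{s, λ²k}`. -/
noncomputable def etaSK (s k : ℕ) (lam : ℝ) : ℝ :=
  ((s : ℝ) + lam ^ 2 * k) / min (s : ℝ) (lam ^ 2 * k)

/-- The ℓ¹-robust null space property of order (s,k) with weight lam, constants ρ, τ. -/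
def L1RNSP {m N : ℕ} (A : Matrix (Fin m) (Fin N) ℂ) (s k : ℕ) (lam ρ τ : ℝ) : Prop :=
  ∀ (x : Fin N → ℂ) (c : Fin m → ℂ) (S : Finset (Fin N)) (T : Finset (Fin m)),
    S.card ≤ s → T.card ≤ k →
      l1norm (restr x S) + lam * l1norm (restr c T) ≤
        ρ * (l1norm (restr x Sᶜ) + lam * l1norm (restr c Tᶜ)) + τ * l2norm (A.mulVec x + c)

/-- The ℓ²-robust null space property of order (s,k) with weight lam, constants ρ, τ. -/
def L2RNSP {m N : ℕ} (A : Matrix (Fin m) (Fin N) ℂ) (s k : ℕ) (lam ρ τ : ℝ) : Prop :=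
  ∀ (x : Fin N → ℂ) (c : Fin m → ℂ) (S : Finset (Fin N)) (T : Finset (Fin m)),
    S.card ≤ s → T.card ≤ k →
      Real.sqrt (l2norm (restr x S) ^ 2 + l2norm (restr c T) ^ 2) ≤
        (ρ / Real.sqrt ((s : ℝ) + lam ^ 2 * k)) *
            (l1norm (restr x Sᶜ) + lam * l1norm (restr c Tᶜ)) +
          τ * l2norm (A.mulVec x + c)

/-- `A` satisfies the two-sided RIP inequality for the sparse corruptions problem of
order `(s,k)` with constant `δ`. -/
def RIPCor {m N : ℕ} (A : Matrix (Fin m) (Fin N) ℂ) (s k : ℕ) (δ : ℝ) : Prop :=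
  ∀ (x : Fin N → ℂ) (c : Fin m → ℂ), IsSparse s x → IsSparse k c →
    (1 - δ) * (l2norm x ^ 2 + l2norm c ^ 2) ≤ l2norm (A.mulVec x + c) ^ 2 ∧
      l2norm (A.mulVec x + c) ^ 2 ≤ (1 + δ) * (l2norm x ^ 2 + l2norm c ^ 2)

/-- `A` satisfies the RIP inequality for sparse vectors of order `s` with constant `δ`. -/
def RIPSparse {m N : ℕ} (A : Matrix (Fin m) (Fin N) ℂ) (s : ℕ) (δ : ℝ) : Prop :=
  ∀ x : Fin N → ℂ, IsSparse s x →
    (1 - δ) * l2norm x ^ 2 ≤ l2norm (A.mulVec x) ^ 2 ∧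
      l2norm (A.mulVec x) ^ 2 ≤ (1 + δ) * l2norm x ^ 2

/-- `(xh, ch)` is a minimizer of `‖z‖₁ + lam ‖d‖₁` subject to `‖Az + d - y‖₂ ≤ ε`. -/
def IsMinimizer {m N : ℕ} (A : Matrix (Fin m) (Fin N) ℂ) (y : Fin m → ℂ) (lam ε : ℝ)
    (xh : Fin N → ℂ) (ch : Fin m → ℂ) : Prop :=
  l2norm (A.mulVec xh + ch - y) ≤ ε ∧
    ∀ (z : Fin N → ℂ) (d : Fin m → ℂ), l2norm (A.mulVec z + d - y) ≤ ε →
      l1norm xh + lam * l1norm ch ≤ l1norm z + lam * l1norm d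

/-- Spectral norm of a matrix (operator norm w.r.t. Euclidean norms). -/
noncomputable def specNorm {a b : ℕ} (B : Matrix (Fin a) (Fin b) ℂ) : ℝ :=
  ‖LinearMap.toContinuousLinearMap (Matrix.toEuclideanLin B)‖

/-- `σ_{s,k}(A)`: the maximum spectral norm over `k × s` submatrices of `A`. -/
noncomputable def sigmaSK {m N : ℕ} (A : Matrix (Fin m) (Fin N) ℂ) (s k : ℕ) : ℝ :=
  sSup {t : ℝ | ∃ (S : Finset (Fin N)) (T : Finset (Fin m)) (hS : S.card = s) (hT : T.card = k),
    t = specNorm (A.submatrix (fun i : Fin k => ((T.orderIsoOfFin hT i : Fin m)))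
      (fun j : Fin s => ((S.orderIsoOfFin hS j : Fin N))))}

namespace SC

noncomputable def toE {n : ℕ} (x : Fin n → ℂ) : EuclideanSpace ℂ (Fin n) :=
  (WithLp.equiv 2 (Fin n → ℂ)).symm x

lemma l2norm_eq_norm {n : ℕ} (x : Fin n → ℂ) : l2norm x = ‖toE x‖ := by
  rw [l2norm, EuclideanSpace.norm_eq]; rfl

lemma l1norm_nonneg {n : ℕ} (x : Fin n → ℂ) : 0 ≤ l1norm x :=
  Finset.sum_nonneg fun _ _ => norm_nonneg _

lemma l2norm_nonneg {n : ℕ} (x : Fin n → ℂ) : 0 ≤ l2norm x := Real.sqrt_nonneg _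

lemma l2norm_sq {n : ℕ} (x : Fin n → ℂ) : l2norm x ^ 2 = ∑ i, ‖x i‖ ^ 2 :=
  Real.sq_sqrt (by positivity)

lemma toE_add {n : ℕ} (x y : Fin n → ℂ) : toE (x + y) = toE x + toE y := rfl

lemma toE_smul {n : ℕ} (μ : ℂ) (x : Fin n → ℂ) : toE (μ • x) = μ • toE x := rfl

lemma l1norm_restr {n : ℕ} (x : Fin n → ℂ) (S : Finset (Fin n)) :
    l1norm (restr x S) = ∑ i ∈ S, ‖x i‖ := by
  rw [l1norm]
  have h : ∀ i, ‖restr x S i‖ = if i ∈ S then ‖x i‖ else 0 := fun i => by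
    by_cases hi : i ∈ S <;> simp [restr, hi]
  simp only [h, Finset.sum_ite_mem, Finset.univ_inter]

lemma l2norm_restr_sq {n : ℕ} (x : Fin n → ℂ) (S : Finset (Fin n)) :
    l2norm (restr x S) ^ 2 = ∑ i ∈ S, ‖x i‖ ^ 2 := by
  rw [l2norm_sq]
  have h : ∀ i, ‖restr x S i‖ ^ 2 = if i ∈ S then ‖x i‖ ^ 2 else 0 := fun i => by
    by_cases hi : i ∈ S <;> simp [restr, hi]
  simp only [h, Finset.sum_ite_mem, Finset.univ_inter]

lemma restr_add_compl {n : ℕ} (x : Fin n → ℂ) (S : Finset (Fin n)) :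
    restr x S + restr x Sᶜ = x := by
  funext i
  by_cases hi : i ∈ S <;> simp [restr, hi]

lemma l1norm_split {n : ℕ} (x : Fin n → ℂ) (S : Finset (Fin n)) :
    l1norm x = l1norm (restr x S) + l1norm (restr x Sᶜ) := by
  rw [l1norm_restr, l1norm_restr, l1norm]
  rw [← Finset.sum_add_sum_compl S]

lemma isSparse_restr {n : ℕ} (x : Fin n → ℂ) (S : Finset (Fin n)) {s : ℕ} (h : S.card ≤ s) :
    IsSparse s (restr x S) := ⟨S, h, fun i hi => if_neg hi⟩

lemma isSparse_zero {n s : ℕ} : IsSparse s (0 : Fin n → ℂ) :=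
  ⟨∅, by simp, fun _ _ => rfl⟩

lemma isSparse_add_smul {n s t : ℕ} {x x' : Fin n → ℂ} (μ : ℂ)
    (hx : IsSparse s x) (hx' : IsSparse t x') : IsSparse (s + t) (x + μ • x') := by
  obtain ⟨S, hS, hSx⟩ := hx
  obtain ⟨T, hT, hTx⟩ := hx'
  refine ⟨S ∪ T, le_trans (Finset.card_union_le _ _) (Nat.add_le_add hS hT), fun i hi => ?_⟩
  rw [Finset.mem_union] at hi
  push_neg at hi
  simp [hSx i hi.1, hTx i hi.2]

lemma sum_le_sqrt_card_mul {ι : Type*} (S : Finset ι) (f : ι → ℝ) (hf : ∀ i ∈ S, 0 ≤ f i) :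
    ∑ i ∈ S, f i ≤ Real.sqrt S.card * Real.sqrt (∑ i ∈ S, f i ^ 2) := by
  have h1 : (∑ i ∈ S, f i) ^ 2 ≤ (S.card : ℝ) * ∑ i ∈ S, f i ^ 2 := by
    exact_mod_cast sq_sum_le_card_mul_sum_sq (s := S) (f := f)
  have h2 : 0 ≤ ∑ i ∈ S, f i := Finset.sum_nonneg hf
  calc ∑ i ∈ S, f i = Real.sqrt ((∑ i ∈ S, f i) ^ 2) := (Real.sqrt_sq h2).symm
    _ ≤ Real.sqrt ((S.card : ℝ) * ∑ i ∈ S, f i ^ 2) := Real.sqrt_le_sqrt h1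
    _ = Real.sqrt S.card * Real.sqrt (∑ i ∈ S, f i ^ 2) := Real.sqrt_mul (by positivity) _

lemma exists_top_subset {ι : Type*} [DecidableEq ι] (f : ι → ℝ) (s : ℕ) (U : Finset ι) :
    ∃ V, V ⊆ U ∧ V.card = min s U.card ∧ ∀ i ∈ V, ∀ j ∈ U \ V, f j ≤ f i := by
  induction s generalizing U with
  | zero => exact ⟨∅, Finset.empty_subset _, by simp, by simp⟩
  | succ s ih =>
    rcases U.eq_empty_or_nonempty with rfl | hU
    · exact ⟨∅, Finset.empty_subset _, by simp, by simp⟩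
    obtain ⟨i₀, hi₀U, hmax⟩ := U.exists_max_image f hU
    obtain ⟨V', hV'sub, hV'card, hV'top⟩ := ih (U.erase i₀)
    have hi₀V' : i₀ ∉ V' := fun h => (Finset.mem_erase.mp (hV'sub h)).1 rfl
    refine ⟨insert i₀ V', ?_, ?_, ?_⟩
    · exact Finset.insert_subset hi₀U (hV'sub.trans (Finset.erase_subset _ _))
    · rw [Finset.card_insert_of_notMem hi₀V', hV'card, Finset.card_erase_of_mem hi₀U]
      have : 1 ≤ U.card := Finset.card_pos.mpr hU
      omega
    · intro i hi j hj
      rw [Finset.mem_sdiff] at hj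
      have hjU : j ∈ U := hj.1
      have hjV : j ∉ insert i₀ V' := hj.2
      rcases Finset.mem_insert.mp hi with rfl | hiV'
      · exact hmax j hjU
      · refine hV'top i hiV' j (Finset.mem_sdiff.mpr ⟨Finset.mem_erase.mpr ⟨?_, hjU⟩,
          fun h => hjV (Finset.mem_insert_of_mem h)⟩)
        rintro rfl; exact hjV (Finset.mem_insert_self _ _)

lemma top_sum_ge {ι : Type*} [DecidableEq ι] (f : ι → ℝ) (hf : ∀ i, 0 ≤ f i)
    (S V : Finset ι) (hcard : S.card ≤ V.card)
    (hsep : ∀ i ∈ V, ∀ j ∉ V, f j ≤ f i) :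
    ∑ i ∈ S, f i ≤ ∑ i ∈ V, f i := by
  rcases V.eq_empty_or_nonempty with rfl | hV
  · have : S = ∅ := Finset.card_eq_zero.mp (le_antisymm (by simpa using hcard) (Nat.zero_le _))
    simp [this]
  obtain ⟨j₀, hj₀, hmin⟩ := V.exists_min_image f hV
  have hkey : ∑ i ∈ S \ V, f i ≤ ∑ i ∈ V \ S, f i := by
    have h1 : ∑ i ∈ S \ V, f i ≤ (S \ V).card * f j₀ := by
      rw [← nsmul_eq_mul]
      refine Finset.sum_le_card_nsmul _ _ _ fun i hi => ?_
      exact hsep j₀ hj₀ i (Finset.mem_sdiff.mp hi).2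
    have h2 : ((V \ S).card : ℝ) * f j₀ ≤ ∑ i ∈ V \ S, f i := by
      rw [← nsmul_eq_mul]
      refine Finset.card_nsmul_le_sum _ _ _ fun i hi => ?_
      exact hmin i (Finset.mem_sdiff.mp hi).1
    have hc : (S \ V).card ≤ (V \ S).card := by
      have e1 : (S \ V).card + (S ∩ V).card = S.card := Finset.card_sdiff_add_card_inter S V
      have e2 : (V \ S).card + (V ∩ S).card = V.card := Finset.card_sdiff_add_card_inter V S
      rw [Finset.inter_comm] at e2
      omega
    calc ∑ i ∈ S \ V, f i ≤ ((S \ V).card : ℝ) * f j₀ := h1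
      _ ≤ ((V \ S).card : ℝ) * f j₀ := by
          exact mul_le_mul_of_nonneg_right (by exact_mod_cast hc) (hf j₀)
      _ ≤ ∑ i ∈ V \ S, f i := h2
  have e1 : ∑ i ∈ S, f i = ∑ i ∈ S ∩ V, f i + ∑ i ∈ S \ V, f i :=
    (Finset.sum_inter_add_sum_sdiff S V f).symm
  have e2 : ∑ i ∈ V, f i = ∑ i ∈ V ∩ S, f i + ∑ i ∈ V \ S, f i :=
    (Finset.sum_inter_add_sum_sdiff V S f).symm
  rw [e1, e2, Finset.inter_comm]
  linarith

end SC
namespace SC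

lemma sq_le_of_sq {x y : ℝ} (hx : 0 ≤ x) (hy : 0 ≤ y) (h : x^2 ≤ y^2) : x ≤ y := by
  nlinarith [sq_nonneg (x - y), sq_nonneg (x + y)]

lemma aux_opt {p q c : ℝ} (hp : 0 ≤ p) (hq : 0 ≤ q) (hc : 0 ≤ c)
    (h : ∀ t : ℝ, 0 < t → 2*t*c ≤ p + t^2*q) : c^2 ≤ p*q := by
  rcases eq_or_lt_of_le hc with hc0 | hcpos
  · nlinarith
  rcases eq_or_lt_of_le hq with hq0 | hqpos
  · exfalso
    have ht := h ((p+1)/(2*c)) (by positivity)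
    rw [← hq0] at ht
    have he : 2 * ((p+1)/(2*c)) * c = p + 1 := by field_simp
    nlinarith
  rcases eq_or_lt_of_le hp with hp0 | hppos
  · exfalso
    have ht := h (c/q) (by positivity)
    rw [← hp0] at ht
    have hq' : q ≠ 0 := ne_of_gt hqpos
    have e1 : 2*(c/q)*c = 2*c^2/q := by field_simp
    have e2 : ((0:ℝ) + (c/q)^2*q) = c^2/q := by field_simp; ring
    rw [e1, e2] at ht
    have := mul_le_mul_of_nonneg_right ht hq
    rw [div_mul_cancel₀ _ hq', div_mul_cancel₀ _ hq'] at this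
    nlinarith [this, hcpos]
  · set t := Real.sqrt (p/q) with htdef
    have ht2 : t^2 = p/q := Real.sq_sqrt (by positivity)
    have htpos : 0 < t := Real.sqrt_pos.mpr (by positivity)
    have htq : t^2*q = p := by rw [ht2]; field_simp
    have h2p : 2*t*c ≤ 2*p := by have := h t htpos; linarith
    have h3 : t*c ≤ p := by linarith
    have h4 : (t*c)^2 ≤ p^2 := by nlinarith [mul_nonneg htpos.le hc]
    rw [mul_pow, ht2] at h4
    rw [div_mul_eq_mul_div, div_le_iff₀ hqpos] at h4
    nlinarith [h4, hppos]

lemma min_combine {c2 p1 q1 p2 q2 a2 b2 δ : ℝ} (hp1 : 0 ≤ p1) (hq1 : 0 ≤ q1)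
    (hp2 : 0 ≤ p2) (hq2 : 0 ≤ q2) (ha2 : 0 < a2) (hb2 : 0 ≤ b2) (hc2 : 0 ≤ c2)
    (hsum1 : p1 + q1 = 2*δ*a2) (hsum2 : p2 + q2 = 2*δ*b2)
    (h1 : c2 ≤ p1*p2) (h2 : c2 ≤ q1*q2) :
    c2 * a2 ≤ p1 * q1 * b2 := by
  by_cases hcase : p2 * a2 ≤ q1 * b2
  · calc c2 * a2 ≤ p1*p2*a2 := by nlinarith
      _ = p1*(p2*a2) := by ring
      _ ≤ p1*(q1*b2) := mul_le_mul_of_nonneg_left hcase hp1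
      _ = p1*q1*b2 := by ring
  · push_neg at hcase
    have hq2b : q2 * a2 ≤ p1 * b2 := by nlinarith
    calc c2 * a2 ≤ q1*q2*a2 := by nlinarith
      _ = q1*(q2*a2) := by ring
      _ ≤ q1*(p1*b2) := mul_le_mul_of_nonneg_left hq2b hq1
      _ = p1*q1*b2 := by ring

set_option maxHeartbeats 1000000 in
lemma master_real (δ a P G W κ : ℝ) (hδ0 : 0 ≤ δ) (hδ1 : δ < 1) (ha : 0 < a)
    (hG : 0 ≤ G) (hW : 0 ≤ W) (hκ : 0 ≤ κ) (hP : 0 ≤ P)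
    (h1 : (1-δ) * a^2 ≤ P^2) (h2 : P^2 ≤ (1+δ) * a^2)
    (h3 : P^2 ≤ P * G + κ * W)
    (h4 : κ^2 * a^2 ≤ (P^2 - (1-δ)*a^2) * ((1+δ)*a^2 - P^2)) :
    Real.sqrt (1-δ) * a ≤ G + (δ / Real.sqrt (1+δ)) * W := by
  have hr1sq : (Real.sqrt (1-δ))^2 = 1-δ := Real.sq_sqrt (by linarith)
  have hr2sq : (Real.sqrt (1+δ))^2 = 1+δ := Real.sq_sqrt (by linarith)
  have hr1pos : 0 < Real.sqrt (1-δ) := Real.sqrt_pos.mpr (by linarith)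
  have hr2pos : 0 < Real.sqrt (1+δ) := Real.sqrt_pos.mpr (by linarith)
  generalize hg1 : Real.sqrt (1-δ) = r1 at *
  generalize hg2 : Real.sqrt (1+δ) = r2 at *
  have hPpos : 0 < P := by
    rcases eq_or_lt_of_le hP with h0 | h0
    · exfalso; rw [← h0] at h1; nlinarith [mul_pos ha ha]
    · exact h0
  have hkey : κ * (r1 * r2) * a ≤ δ * P^2 := by
    have hmul := mul_le_mul_of_nonneg_right h4
      (show (0:ℝ) ≤ (1-δ)*(1+δ) by nlinarith)
    have hid : (δ*P^2)^2 - (P^2 - (1-δ)*a^2) * ((1+δ)*a^2 - P^2) * ((1-δ)*(1+δ))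
        = (P^2 - (1-δ)*(1+δ)*a^2)^2 := by ring
    have hsq : (κ * (r1*r2) * a)^2 ≤ (δ * P^2)^2 := by
      have e1 : (κ*(r1*r2)*a)^2 = κ^2*a^2*((r1*r2)^2) := by ring
      have hr12 : (r1*r2)^2 = (1-δ)*(1+δ) := by rw [mul_pow, hr1sq, hr2sq]
      rw [e1, hr12]
      nlinarith [hmul, hid, sq_nonneg (P^2 - (1-δ)*(1+δ)*a^2)]
    have hlhs : 0 ≤ κ * (r1*r2) * a :=
      mul_nonneg (mul_nonneg hκ (mul_nonneg hr1pos.le hr2pos.le)) ha.le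
    exact sq_le_of_sq hlhs (by positivity) hsq
  by_cases hcase : r1 * r2 * a ≤ δ * W
  · have : r1 * a ≤ (δ / r2) * W := by
      rw [div_mul_eq_mul_div, le_div_iff₀ hr2pos]
      nlinarith
    linarith
  push_neg at hcase
  have henough : r1*a*P*r2 + W*(κ*r2 - δ*P) ≤ P^2*r2 := by
    by_cases hc2 : κ * r2 ≤ δ * P
    · have hPr1a : r1 * a ≤ P := by
        refine sq_le_of_sq (mul_nonneg hr1pos.le ha.le) hP ?_
        nlinarith [hr1sq]
      have hw : W*(κ*r2 - δ*P) ≤ 0 :=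
        mul_nonpos_of_nonneg_of_nonpos hW (by linarith)
      have hm : r1*a*(P*r2) ≤ P*(P*r2) :=
        mul_le_mul_of_nonneg_right hPr1a (mul_nonneg hPpos.le hr2pos.le)
      nlinarith [hm, hw]
    · push_neg at hc2
      have hX : 0 < κ*r2 - δ*P := by linarith
      have s1 : δ*W*(κ*r2 - δ*P) ≤ r1*r2*a*(κ*r2 - δ*P) :=
        mul_le_mul_of_nonneg_right hcase.le hX.le
      have s2 : κ*(r1*r2)*a*r2 ≤ δ*P^2*r2 :=
        mul_le_mul_of_nonneg_right hkey hr2pos.le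
      have hδpos : 0 < δ := by
        rcases eq_or_lt_of_le hδ0 with h0 | h0
        · exfalso
          rw [← h0] at hc2 h4
          have hκpos : 0 < κ := by nlinarith
          nlinarith [sq_nonneg (P^2 - a^2), mul_pos (mul_pos hκpos hκpos) (mul_pos ha ha)]
        · exact h0
      have hscaled : (r1*a*P*r2 + W*(κ*r2 - δ*P))*δ ≤ (P^2*r2)*δ := by
        nlinarith [s1, s2]
      exact le_of_mul_le_mul_right hscaled hδpos
  have hc1 : (δ/r2)*r2 = δ := div_mul_cancel₀ δ (ne_of_gt hr2pos)
  have hfinal_scaled : (r1*a*P)*r2 ≤ ((G + (δ/r2)*W)*P)*r2 := by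
    have e : ((G + (δ/r2)*W)*P)*r2 = P*G*r2 + W*P*((δ/r2)*r2) := by ring
    rw [e, hc1]
    nlinarith [henough]
  have := le_of_mul_le_mul_right hfinal_scaled hr2pos
  exact le_of_mul_le_mul_right this hPpos


lemma lift_ineq {ι : Type*} (F : Finset ι) (f : ι → ℝ) (s : ℕ) (hs : 1 ≤ s)
    (M m : ℝ) (hm0 : 0 ≤ m) (hmM : m ≤ M)
    (hbound : ∀ i ∈ F, m ≤ f i ∧ f i ≤ M)
    (hcard : F.card ≤ s) (hcase : m = 0 ∨ F.card = s) :
    Real.sqrt (∑ i ∈ F, f i ^ 2) ≤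
      (∑ i ∈ F, f i) / Real.sqrt s + Real.sqrt s * (M - m) / 4 := by
  have hf0 : ∀ i ∈ F, 0 ≤ f i := fun i hi => le_trans hm0 (hbound i hi).1
  set S1 := ∑ i ∈ F, f i with hS1
  have hS1n : 0 ≤ S1 := Finset.sum_nonneg hf0
  have hsum_sq : ∑ i ∈ F, f i ^ 2 ≤ (M+m) * S1 - F.card * (M*m) := by
    have hterm : ∀ i ∈ F, f i ^ 2 ≤ (M+m) * f i - M*m := fun i hi => by
      nlinarith [(hbound i hi).1, (hbound i hi).2]
    calc ∑ i ∈ F, f i^2 ≤ ∑ i ∈ F, ((M+m)*f i - M*m) := Finset.sum_le_sum hterm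
      _ = (M+m)*S1 - F.card*(M*m) := by
          rw [Finset.sum_sub_distrib, ← Finset.mul_sum, Finset.sum_const, nsmul_eq_mul]
  set rs := Real.sqrt s with hrsdef
  have hrs : rs^2 = s := Real.sq_sqrt (by positivity)
  have hrspos : 0 < rs := Real.sqrt_pos.mpr (by exact_mod_cast Nat.lt_of_lt_of_le Nat.zero_lt_one hs)
  have hkey : (∑ i ∈ F, f i^2) * (s:ℝ) ≤ (S1 + (s:ℝ)*(M-m)/4)^2 := by
    have hn : (F.card : ℝ) ≤ (s:ℝ) := by exact_mod_cast hcard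
    have hspos : (0:ℝ) < s := by exact_mod_cast Nat.lt_of_lt_of_le Nat.zero_lt_one hs
    rcases hcase with rfl | hceq
    · have hsum0 : ∑ i ∈ F, f i ^ 2 ≤ M * S1 := by
        have : (F.card:ℝ) * (M*0) = 0 := by ring
        nlinarith [hsum_sq]
      nlinarith [sq_nonneg (S1 - (s:ℝ)*M/4), mul_nonneg hS1n (mul_nonneg hspos.le hmM)]
    · have hceqR : (F.card:ℝ) = (s:ℝ) := by exact_mod_cast hceq
      rw [hceqR] at hsum_sq
      nlinarith [sq_nonneg (S1 - (s:ℝ)*(M+3*m)/4),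
        mul_nonneg (mul_nonneg (mul_nonneg hspos.le hspos.le) hm0) (sub_nonneg.mpr hmM)]
  have hRHSn : 0 ≤ S1 + (s:ℝ)*(M-m)/4 := by
    have : (0:ℝ) ≤ (s:ℝ) := by positivity
    nlinarith
  have h5 : ∑ i ∈ F, f i^2 ≤ ((S1 + (s:ℝ)*(M-m)/4)/rs)^2 := by
    rw [div_pow, le_div_iff₀ (by positivity)]
    rw [hrs]
    exact hkey
  have h6 : Real.sqrt (∑ i ∈ F, f i^2) ≤ (S1 + (s:ℝ)*(M-m)/4)/rs := by
    calc Real.sqrt (∑ i ∈ F, f i^2) ≤ Real.sqrt (((S1 + (s:ℝ)*(M-m)/4)/rs)^2) :=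
          Real.sqrt_le_sqrt h5
      _ = (S1 + (s:ℝ)*(M-m)/4)/rs := Real.sqrt_sq (by positivity)
  calc Real.sqrt (∑ i ∈ F, f i^2) ≤ (S1 + (s:ℝ)*(M-m)/4)/rs := h6
    _ = S1/rs + rs*(M-m)/4 := by
        rw [← hrs]
        field_simp

end SC
namespace SC

lemma l2_disjoint_sq {n : ℕ} (x x' : Fin n → ℂ) (μ : ℂ)
    (hd : ∀ i, x i = 0 ∨ x' i = 0) :
    l2norm (x + μ • x') ^ 2 = l2norm x ^ 2 + ‖μ‖^2 * l2norm x' ^ 2 := by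
  rw [l2norm_sq, l2norm_sq, l2norm_sq, Finset.mul_sum, ← Finset.sum_add_distrib]
  refine Finset.sum_congr rfl fun i _ => ?_
  have : (x + μ • x') i = x i + μ * x' i := rfl
  rw [this]
  rcases hd i with h | h
  · simp [h, norm_mul, mul_pow]
  · simp [h]

lemma l2_expansion {n : ℕ} (p q : Fin n → ℂ) (μ : ℂ) :
    l2norm (p + μ • q) ^ 2 = l2norm p ^ 2 + 2*(μ * (inner ℂ (toE p) (toE q) : ℂ)).re
      + ‖μ‖^2 * l2norm q ^ 2 := by
  rw [l2norm_eq_norm, l2norm_eq_norm, l2norm_eq_norm, toE_add, toE_smul]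
  rw [@norm_add_sq ℂ _ _ _ _ (toE p) (μ • toE q)]
  rw [inner_smul_right]
  rw [norm_smul]
  simp [mul_pow]

lemma cross_bound {m N s k : ℕ} {A : Matrix (Fin m) (Fin N) ℂ} {δ : ℝ}
    (hrip : RIPCor A (2*s) (2*k) δ)
    {x x' : Fin N → ℂ} {c c' : Fin m → ℂ}
    (hx : IsSparse s x) (hx' : IsSparse s x') (hc : IsSparse k c) (hc' : IsSparse k c')
    (hdx : ∀ i, x i = 0 ∨ x' i = 0) (hdc : ∀ i, c i = 0 ∨ c' i = 0)
    (ha2 : 0 < l2norm x^2 + l2norm c^2) :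
    ‖(inner ℂ (toE (A.mulVec x + c)) (toE (A.mulVec x' + c')) : ℂ)‖^2
        * (l2norm x^2 + l2norm c^2)
      ≤ ((l2norm (A.mulVec x + c)^2 - (1-δ)*(l2norm x^2 + l2norm c^2))
        * ((1+δ)*(l2norm x^2 + l2norm c^2) - l2norm (A.mulVec x + c)^2))
        * (l2norm x'^2 + l2norm c'^2) := by
  set a2 := l2norm x^2 + l2norm c^2 with ha2def
  set b2 := l2norm x'^2 + l2norm c'^2 with hb2def
  set Bu := A.mulVec x + c with hBu
  set Bw := A.mulVec x' + c' with hBw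
  set γ : ℂ := inner ℂ (toE Bu) (toE Bw) with hγ
  set P2 := l2norm Bu ^ 2 with hP2
  set Q2 := l2norm Bw ^ 2 with hQ2
  have hRIP : ∀ μ : ℂ, (1-δ) * (a2 + ‖μ‖^2*b2) ≤ P2 + 2*(μ*γ).re + ‖μ‖^2*Q2
      ∧ P2 + 2*(μ*γ).re + ‖μ‖^2*Q2 ≤ (1+δ) * (a2 + ‖μ‖^2*b2) := by
    intro μ
    have hsx : IsSparse (2*s) (x + μ • x') := by
      rw [two_mul]; exact isSparse_add_smul μ hx hx'
    have hsc : IsSparse (2*k) (c + μ • c') := by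
      rw [two_mul]; exact isSparse_add_smul μ hc hc'
    have hr := hrip (x + μ • x') (c + μ • c') hsx hsc
    have hlin : A.mulVec (x + μ • x') + (c + μ • c') = Bu + μ • Bw := by
      rw [Matrix.mulVec_add, Matrix.mulVec_smul, hBu, hBw]
      funext i
      simp [Pi.smul_apply, smul_eq_mul]
      ring
    rw [hlin, l2_disjoint_sq x x' μ hdx, l2_disjoint_sq c c' μ hdc,
        l2_expansion Bu Bw μ] at hr
    constructor
    · calc (1-δ)*(a2 + ‖μ‖^2*b2)
          = (1-δ)*(l2norm x^2 + ‖μ‖^2*l2norm x'^2 + (l2norm c^2 + ‖μ‖^2*l2norm c'^2)) := by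
            rw [ha2def, hb2def]; ring
        _ ≤ _ := hr.1
    · calc P2 + 2*(μ*γ).re + ‖μ‖^2*Q2 ≤ _ := hr.2
        _ = (1+δ)*(a2 + ‖μ‖^2*b2) := by rw [ha2def, hb2def]; ring
  have hp1 : 0 ≤ P2 - (1-δ)*a2 := by
    have := (hRIP 0).1; simp at this; linarith
  have hq1 : 0 ≤ (1+δ)*a2 - P2 := by
    have := (hRIP 0).2; simp at this; linarith
  have hp2q2 : (1-δ)*b2 ≤ Q2 ∧ Q2 ≤ (1+δ)*b2 := by
    have hsx' : IsSparse (2*s) x' := by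
      obtain ⟨S, hS, hSz⟩ := hx'; exact ⟨S, le_trans hS (by omega), hSz⟩
    have hsc' : IsSparse (2*k) c' := by
      obtain ⟨S, hS, hSz⟩ := hc'; exact ⟨S, le_trans hS (by omega), hSz⟩
    have := hrip x' c' hsx' hsc'
    exact ⟨this.1, this.2⟩
  -- the two families
  have hfam : ∀ t : ℝ, 0 < t → γ ≠ 0 →
      ((μ : ℂ) → True) → True := fun _ _ _ _ => trivial
  have hmu : ∀ t : ℝ, 0 < t → γ ≠ 0 →
      ∃ μplus μminus : ℂ, (μplus*γ).re = t*‖γ‖ ∧ (μminus*γ).re = -(t*‖γ‖)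
        ∧ ‖μplus‖^2 = t^2 ∧ ‖μminus‖^2 = t^2 := by
    intro t ht hγ0
    have hnγ : (0:ℝ) < ‖γ‖ := norm_pos_iff.mpr hγ0
    refine ⟨((t*‖γ‖ : ℝ) : ℂ)/γ, -(((t*‖γ‖ : ℝ) : ℂ)/γ), ?_, ?_, ?_, ?_⟩
    · rw [div_mul_cancel₀ _ hγ0, Complex.ofReal_re]
    · rw [neg_mul, div_mul_cancel₀ _ hγ0]
      simp
    · rw [norm_div, Complex.norm_real, Real.norm_eq_abs, abs_of_pos (by positivity)]
      rw [div_pow, mul_pow, mul_div_assoc,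
        div_self (by positivity : ‖γ‖^2 ≠ 0), mul_one]
    · rw [norm_neg, norm_div, Complex.norm_real, Real.norm_eq_abs,
        abs_of_pos (by positivity)]
      rw [div_pow, mul_pow, mul_div_assoc,
        div_self (by positivity : ‖γ‖^2 ≠ 0), mul_one]
  have hkey1 : ‖γ‖^2 ≤ (P2 - (1-δ)*a2) * (Q2 - (1-δ)*b2) := by
    refine aux_opt hp1 (by linarith [hp2q2.1]) (norm_nonneg _) ?_
    intro t ht
    rcases eq_or_ne γ 0 with hγ0 | hγ0
    · rw [hγ0]
      simp
      nlinarith [hp2q2.1]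
    · obtain ⟨μp, μm, hrp, hrm, hnp, hnm⟩ := hmu t ht hγ0
      have := (hRIP μm).1
      rw [hrm, hnm] at this
      nlinarith [this]
  have hkey2 : ‖γ‖^2 ≤ ((1+δ)*a2 - P2) * ((1+δ)*b2 - Q2) := by
    refine aux_opt hq1 (by linarith [hp2q2.2]) (norm_nonneg _) ?_
    intro t ht
    rcases eq_or_ne γ 0 with hγ0 | hγ0
    · rw [hγ0]
      simp
      nlinarith [hp2q2.2]
    · obtain ⟨μp, μm, hrp, hrm, hnp, hnm⟩ := hmu t ht hγ0
      have := (hRIP μp).2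
      rw [hrp, hnp] at this
      nlinarith [this]
  exact min_combine (δ := δ) hp1 hq1 (by linarith [hp2q2.1]) (by linarith [hp2q2.2]) ha2
    (by rw [hb2def]; positivity) (sq_nonneg _) (by ring) (by ring) hkey1 hkey2

end SC
namespace SC

lemma restr_union_split {n : ℕ} (h : Fin n → ℂ) {V U : Finset (Fin n)} (hVU : V ⊆ U) :
    restr h V + restr h (U \ V) = restr h U := by
  funext i
  by_cases hiV : i ∈ V
  · have hiU : i ∈ U := hVU hiV
    simp [restr, hiV, hiU, Finset.mem_sdiff]
  · by_cases hiU : i ∈ U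
    · simp [restr, hiV, hiU, Finset.mem_sdiff]
    · simp [restr, hiV, hiU, Finset.mem_sdiff]

lemma l2norm_restr_eq_sqrt {n : ℕ} (h : Fin n → ℂ) (S : Finset (Fin n)) :
    l2norm (restr h S) = Real.sqrt (∑ i ∈ S, ‖h i‖ ^ 2) := by
  rw [← l2norm_restr_sq]
  exact (Real.sqrt_sq (l2norm_nonneg _)).symm

lemma tail_partition {n : ℕ} (h : Fin n → ℂ) (s : ℕ) (hs : 1 ≤ s)
    (U : Finset (Fin n)) :
    ∀ (μ : ℝ), 0 ≤ μ → (∀ i ∈ U, ‖h i‖ ≤ μ) →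
    ∃ L : List (Finset (Fin n)),
      (∀ B ∈ L, B.card ≤ s ∧ B ⊆ U) ∧
      (L.map (fun B => restr h B)).sum = restr h U ∧
      (L.map (fun B => l2norm (restr h B))).sum ≤
        (∑ i ∈ U, ‖h i‖) / Real.sqrt s + Real.sqrt s * μ / 4 := by
  induction U using Finset.strongInduction with
  | _ U ih =>
    intro μ hμ0 hbound
    rcases U.eq_empty_or_nonempty with rfl | hU
    · refine ⟨[], by simp, ?_, ?_⟩
      · simp only [List.map_nil, List.sum_nil]
        funext i
        simp [restr]
      · simp only [List.map_nil, List.sum_nil]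
        positivity
    by_cases hcard : U.card ≤ s
    · refine ⟨[U], ?_, ?_, ?_⟩
      · intro B hB
        rw [List.mem_singleton] at hB
        subst hB; exact ⟨hcard, Finset.Subset.refl _⟩
      · simp
      · simp only [List.map_cons, List.map_nil, List.sum_cons, List.sum_nil, add_zero]
        rw [l2norm_restr_eq_sqrt]
        have := lift_ineq U (fun i => ‖h i‖) s hs μ 0 le_rfl hμ0
          (fun i hi => ⟨norm_nonneg _, hbound i hi⟩) hcard (Or.inl rfl)
        simpa using this
    · push_neg at hcard
      obtain ⟨V, hVU, hVcard, hVsep⟩ := exists_top_subset (fun i => ‖h i‖) s U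
      have hVcard' : V.card = s := by rw [hVcard]; omega
      have hVne : V.Nonempty := Finset.card_pos.mp (by omega)
      obtain ⟨j₀, hj₀V, hj₀min⟩ := V.exists_min_image (fun i => ‖h i‖) hVne
      set μ' := ‖h j₀‖ with hμ'
      have hμ'0 : 0 ≤ μ' := norm_nonneg _
      have hμ'μ : μ' ≤ μ := hbound j₀ (hVU hj₀V)
      have hssub : U \ V ⊂ U := by
        refine Finset.sdiff_ssubset ?_ hVne
        exact hVU
      obtain ⟨L', hL'prop, hL'sum, hL'ineq⟩ := ih (U \ V) hssub μ' hμ'0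
        (fun i hi => hVsep j₀ hj₀V i (by
          rw [Finset.mem_sdiff] at hi ⊢
          exact ⟨hi.1, hi.2⟩))
      refine ⟨V :: L', ?_, ?_, ?_⟩
      · intro B hB
        rcases List.mem_cons.mp hB with rfl | hB'
        · exact ⟨le_of_eq hVcard', hVU⟩
        · exact ⟨(hL'prop B hB').1, (hL'prop B hB').2.trans (Finset.sdiff_subset)⟩
      · simp only [List.map_cons, List.sum_cons]
        rw [hL'sum]
        exact restr_union_split h hVU
      · simp only [List.map_cons, List.sum_cons]
        have hlift : l2norm (restr h V) ≤
            (∑ i ∈ V, ‖h i‖) / Real.sqrt s + Real.sqrt s * (μ - μ') / 4 := by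
          rw [l2norm_restr_eq_sqrt]
          exact lift_ineq V (fun i => ‖h i‖) s hs μ μ' hμ'0 hμ'μ
            (fun i hi => ⟨hj₀min i hi, hbound i (hVU hi)⟩) (le_of_eq hVcard')
            (Or.inr hVcard')
        have hsplit : ∑ i ∈ U \ V, ‖h i‖ + ∑ i ∈ V, ‖h i‖ = ∑ i ∈ U, ‖h i‖ :=
          Finset.sum_sdiff hVU
        have hrs : 0 < Real.sqrt s := Real.sqrt_pos.mpr (by exact_mod_cast hs)
        have : (∑ i ∈ V, ‖h i‖) / Real.sqrt s + (∑ i ∈ U \ V, ‖h i‖) / Real.sqrt s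
            = (∑ i ∈ U, ‖h i‖) / Real.sqrt s := by
          rw [← add_div, add_comm, hsplit]
        linarith [hlift, hL'ineq]
end SC
namespace SC

lemma re_ge_neg_norm (z : ℂ) : -‖z‖ ≤ z.re := by
  have := Complex.abs_re_le_norm z
  exact (abs_le.mp this).1

lemma mulVec_list_sum {m N : ℕ} (A : Matrix (Fin m) (Fin N) ℂ) (l : List (Fin N → ℂ)) :
    A.mulVec l.sum = (l.map (fun v => A.mulVec v)).sum := by
  induction l with
  | nil => simp [Matrix.mulVec_zero]
  | cons a t iht => simp [Matrix.mulVec_add, iht]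

lemma inner_list_sum {m : ℕ} (x : EuclideanSpace ℂ (Fin m)) (l : List (Fin m → ℂ)) :
    (inner ℂ x (toE l.sum) : ℂ) = (l.map (fun v => (inner ℂ x (toE v) : ℂ))).sum := by
  induction l with
  | nil =>
    simp only [List.sum_nil, List.map_nil]
    have : toE (0 : Fin m → ℂ) = 0 := rfl
    rw [this, inner_zero_right]
  | cons a t iht =>
    simp only [List.sum_cons, List.map_cons]
    rw [toE_add, inner_add_right, iht]

lemma list_sum_re_ge {α : Type*} (l : List α) (f : α → ℝ) (g : α → ℝ) (κ : ℝ)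
    (hb : ∀ v ∈ l, -(κ * g v) ≤ f v) :
    -(κ * (l.map g).sum) ≤ (l.map f).sum := by
  induction l with
  | nil => simp
  | cons a t iht =>
    simp only [List.map_cons, List.sum_cons]
    have h1 := hb a (List.mem_cons_self)
    have h2 := iht (fun v hv => hb v (List.mem_cons_of_mem a hv))
    have : -(κ * (g a + (t.map g).sum)) = -(κ * g a) + -(κ * (t.map g).sum) := by ring
    rw [this]
    exact add_le_add h1 h2

lemma sum_two_le_sqrt2 {x y : ℝ} (hx : 0 ≤ x) (hy : 0 ≤ y) :
    x + y ≤ Real.sqrt 2 * Real.sqrt (x^2 + y^2) := by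
  have h2 : (Real.sqrt 2)^2 = 2 := Real.sq_sqrt (by norm_num)
  have hs : (Real.sqrt (x^2+y^2))^2 = x^2+y^2 := Real.sq_sqrt (by positivity)
  refine sq_le_of_sq (by positivity) (by positivity) ?_
  rw [mul_pow, h2, hs]
  nlinarith [sq_nonneg (x - y)]

lemma sqrt_lam_mul {s k : ℕ} (hk : 1 ≤ k) :
    Real.sqrt ((s:ℝ)/k) * Real.sqrt (k:ℝ) = Real.sqrt (s:ℝ) := by
  rw [← Real.sqrt_mul (by positivity)]
  congr 1
  field_simp

lemma l2norm_restr_mono {n : ℕ} (h : Fin n → ℂ) {S V : Finset (Fin n)}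
    (hcard : S.card ≤ V.card) (hsep : ∀ i ∈ V, ∀ j ∉ V, ‖h j‖ ≤ ‖h i‖) :
    l2norm (restr h S) ≤ l2norm (restr h V) := by
  rw [l2norm_restr_eq_sqrt, l2norm_restr_eq_sqrt]
  apply Real.sqrt_le_sqrt
  exact top_sum_ge (fun i => ‖h i‖^2) (fun i => by positivity) S V hcard
    (fun i hi j hj => by
      have h1 := hsep i hi j hj
      have h2 := norm_nonneg (h j)
      nlinarith [h1, h2])

lemma l1norm_restr_mono {n : ℕ} (h : Fin n → ℂ) {S V : Finset (Fin n)}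
    (hcard : S.card ≤ V.card) (hsep : ∀ i ∈ V, ∀ j ∉ V, ‖h j‖ ≤ ‖h i‖) :
    l1norm (restr h S) ≤ l1norm (restr h V) := by
  rw [l1norm_restr, l1norm_restr]
  exact top_sum_ge (fun i => ‖h i‖) (fun i => norm_nonneg _) S V hcard hsep

lemma l1norm_restr_compl_mono {n : ℕ} (h : Fin n → ℂ) {S V : Finset (Fin n)}
    (hcard : S.card ≤ V.card) (hsep : ∀ i ∈ V, ∀ j ∉ V, ‖h j‖ ≤ ‖h i‖) :
    l1norm (restr h Vᶜ) ≤ l1norm (restr h Sᶜ) := by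
  have h1 := l1norm_split h S
  have h2 := l1norm_split h V
  have := l1norm_restr_mono h hcard hsep
  linarith

lemma l1_le_sqrt_l2 {n : ℕ} (h : Fin n → ℂ) (S : Finset (Fin n)) {s : ℕ} (hS : S.card ≤ s) :
    l1norm (restr h S) ≤ Real.sqrt s * l2norm (restr h S) := by
  rw [l1norm_restr, l2norm_restr_eq_sqrt]
  calc ∑ i ∈ S, ‖h i‖ ≤ Real.sqrt S.card * Real.sqrt (∑ i ∈ S, ‖h i‖^2) :=
        sum_le_sqrt_card_mul S _ (fun i _ => norm_nonneg _)
    _ ≤ Real.sqrt s * Real.sqrt (∑ i ∈ S, ‖h i‖^2) := by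
        apply mul_le_mul_of_nonneg_right _ (Real.sqrt_nonneg _)
        exact Real.sqrt_le_sqrt (by exact_mod_cast hS)

end SC
namespace SC

lemma list_re_sum (l : List ℂ) : l.sum.re = (l.map Complex.re).sum := by
  induction l with
  | nil => simp
  | cons a t iht => simp [iht]

lemma l2norm_zero {n : ℕ} : l2norm (0 : Fin n → ℂ) = 0 := by
  simp [l2norm]

lemma norm_le_kappa {γn w a2 pq κ : ℝ} (hγn : 0 ≤ γn) (hw : 0 ≤ w) (hκ : 0 ≤ κ)
    (ha2 : 0 < a2) (hcb : γn^2 * a2 ≤ pq * w^2) (hκsq : κ^2 * a2 = pq) :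
    γn ≤ κ * w := by
  refine sq_le_of_sq hγn (mul_nonneg hκ hw) ?_
  have key : γn^2 * a2 ≤ (κ*w)^2 * a2 := by nlinarith [hcb, hκsq]
  nlinarith [key, ha2]

set_option maxHeartbeats 1600000 in
lemma rnsp {m N s k : ℕ} (hs : 1 ≤ s) (hsN : s ≤ N) (hk : 1 ≤ k) (hkm : k ≤ m)
    {δ : ℝ} (hδ0 : 0 ≤ δ) (hδ1 : δ < 1)
    {A : Matrix (Fin m) (Fin N) ℂ} (hrip : RIPCor A (2*s) (2*k) δ)
    (hD : 0 < Real.sqrt (1-δ) - Real.sqrt 2 * δ / (4 * Real.sqrt (1+δ)))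
    (h : Fin N → ℂ) (e : Fin m → ℂ) (S : Finset (Fin N)) (T : Finset (Fin m))
    (hS : S.card ≤ s) (hT : T.card ≤ k) :
    l1norm (restr h S) + Real.sqrt ((s:ℝ)/k) * l1norm (restr e T) ≤
      (Real.sqrt 2 * δ / (Real.sqrt (1+δ) *
          (Real.sqrt (1-δ) - Real.sqrt 2 * δ / (4 * Real.sqrt (1+δ)))))
        * (l1norm (restr h Sᶜ) + Real.sqrt ((s:ℝ)/k) * l1norm (restr e Tᶜ))
      + (Real.sqrt (2*(s:ℝ)) /
          (Real.sqrt (1-δ) - Real.sqrt 2 * δ / (4 * Real.sqrt (1+δ))))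
        * l2norm (A.mulVec h + e) := by
  have hr2pos : 0 < Real.sqrt (1+δ) := Real.sqrt_pos.mpr (by linarith)
  have hrspos : 0 < Real.sqrt (s:ℝ) := Real.sqrt_pos.mpr (by exact_mod_cast hs)
  have hrkpos : 0 < Real.sqrt (k:ℝ) := Real.sqrt_pos.mpr (by exact_mod_cast hk)
  have hlam0 : 0 ≤ Real.sqrt ((s:ℝ)/k) := Real.sqrt_nonneg _
  set lam := Real.sqrt ((s:ℝ)/k) with hlamdef
  set D := Real.sqrt (1-δ) - Real.sqrt 2 * δ / (4 * Real.sqrt (1+δ)) with hDdef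
  set G := l2norm (A.mulVec h + e) with hGdef
  have hG0 : 0 ≤ G := l2norm_nonneg _
  -- top sets
  obtain ⟨Sh, hShsub, hShcard, hShsep'⟩ := exists_top_subset (fun i => ‖h i‖) s Finset.univ
  have hShcard' : Sh.card = s := by
    rw [hShcard, Finset.card_univ, Fintype.card_fin]; omega
  have hShsep : ∀ i ∈ Sh, ∀ j ∉ Sh, ‖h j‖ ≤ ‖h i‖ := fun i hi j hj =>
    hShsep' i hi j (Finset.mem_sdiff.mpr ⟨Finset.mem_univ _, hj⟩)
  obtain ⟨Te, hTesub, hTecard, hTesep'⟩ := exists_top_subset (fun i => ‖e i‖) k Finset.univ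
  have hTecard' : Te.card = k := by
    rw [hTecard, Finset.card_univ, Fintype.card_fin]; omega
  have hTesep : ∀ i ∈ Te, ∀ j ∉ Te, ‖e j‖ ≤ ‖e i‖ := fun i hi j hj =>
    hTesep' i hi j (Finset.mem_sdiff.mpr ⟨Finset.mem_univ _, hj⟩)
  set ah := l2norm (restr h Sh) with hahdef
  set ae := l2norm (restr e Te) with haedef
  have hah0 : 0 ≤ ah := l2norm_nonneg _
  have hae0 : 0 ≤ ae := l2norm_nonneg _
  set R := l1norm (restr h Shᶜ) + lam * l1norm (restr e Teᶜ) with hRdef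
  have hR0 : 0 ≤ R :=
    add_nonneg (l1norm_nonneg _) (mul_nonneg hlam0 (l1norm_nonneg _))
  have hRmono : R ≤ l1norm (restr h Sᶜ) + lam * l1norm (restr e Tᶜ) := by
    refine add_le_add (l1norm_restr_compl_mono h (by omega) hShsep) ?_
    exact mul_le_mul_of_nonneg_left
      (l1norm_restr_compl_mono e (by omega) hTesep) hlam0
  -- LHS bound
  have hL1 : l1norm (restr h S) + lam * l1norm (restr e T)
      ≤ Real.sqrt (s:ℝ) * (ah + ae) := by
    have h1 : l1norm (restr h S) ≤ Real.sqrt (s:ℝ) * l2norm (restr h S) :=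
      l1_le_sqrt_l2 h S hS
    have h2 : l1norm (restr e T) ≤ Real.sqrt (k:ℝ) * l2norm (restr e T) :=
      l1_le_sqrt_l2 e T hT
    have h3 : l2norm (restr h S) ≤ ah := l2norm_restr_mono h (by omega) hShsep
    have h4 : l2norm (restr e T) ≤ ae := l2norm_restr_mono e (by omega) hTesep
    have h5 : lam * Real.sqrt (k:ℝ) = Real.sqrt (s:ℝ) := sqrt_lam_mul hk
    calc l1norm (restr h S) + lam * l1norm (restr e T)
        ≤ Real.sqrt (s:ℝ) * l2norm (restr h S)
            + lam * (Real.sqrt (k:ℝ) * l2norm (restr e T)) := by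
          refine add_le_add h1 (mul_le_mul_of_nonneg_left h2 hlam0)
      _ = Real.sqrt (s:ℝ) * l2norm (restr h S)
            + Real.sqrt (s:ℝ) * l2norm (restr e T) := by rw [← mul_assoc, h5]
      _ ≤ Real.sqrt (s:ℝ) * (ah + ae) := by nlinarith [hrspos, h3, h4]
  -- coefficients nonneg
  have hρ0 : 0 ≤ Real.sqrt 2 * δ / (Real.sqrt (1+δ) * D) :=
    div_nonneg (mul_nonneg (Real.sqrt_nonneg _) hδ0)
      (mul_nonneg hr2pos.le hD.le)
  have hτ0 : 0 ≤ Real.sqrt (2*(s:ℝ)) / D := div_nonneg (Real.sqrt_nonneg _) hD.le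
  set a2 := ah^2 + ae^2 with ha2def
  have ha2nn : 0 ≤ a2 := add_nonneg (sq_nonneg _) (sq_nonneg _)
  rcases eq_or_lt_of_le ha2nn with ha20 | ha2pos
  · -- degenerate case
    have hah' : ah = 0 := by nlinarith [sq_nonneg ah, sq_nonneg ae]
    have hae' : ae = 0 := by nlinarith [sq_nonneg ah, sq_nonneg ae]
    have hLHS0 : l1norm (restr h S) + lam * l1norm (restr e T) ≤ 0 := by
      rw [hah', hae'] at hL1; simpa using hL1
    refine le_trans hLHS0 ?_
    have hR'0 : 0 ≤ l1norm (restr h Sᶜ) + lam * l1norm (restr e Tᶜ) :=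
      add_nonneg (l1norm_nonneg _) (mul_nonneg hlam0 (l1norm_nonneg _))
    exact add_nonneg (mul_nonneg hρ0 hR'0) (mul_nonneg hτ0 hG0)
  -- main case
  set a := Real.sqrt a2 with hadef
  have hasq : a^2 = a2 := Real.sq_sqrt ha2nn
  have hapos : 0 < a := Real.sqrt_pos.mpr ha2pos
  set Bu := A.mulVec (restr h Sh) + restr e Te with hBudef
  set P := l2norm Bu with hPdef
  have hP0 : 0 ≤ P := l2norm_nonneg _
  have hripu := hrip (restr h Sh) (restr e Te)
    (isSparse_restr h Sh (by omega)) (isSparse_restr e Te (by omega))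
  have hP1 : (1-δ) * a^2 ≤ P^2 := by rw [hasq]; exact hripu.1
  have hP2 : P^2 ≤ (1+δ) * a^2 := by rw [hasq]; exact hripu.2
  -- partitions of the complements
  have hShne : Sh.Nonempty := Finset.card_pos.mp (by omega)
  obtain ⟨j₀, hj₀, hj₀min⟩ := Sh.exists_min_image (fun i => ‖h i‖) hShne
  have hTene : Te.Nonempty := Finset.card_pos.mp (by omega)
  obtain ⟨i₀, hi₀, hi₀min⟩ := Te.exists_min_image (fun i => ‖e i‖) hTene
  have hμh0 : 0 ≤ ‖h j₀‖ := norm_nonneg _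
  have hμe0 : 0 ≤ ‖e i₀‖ := norm_nonneg _
  have hμhb : ∀ i ∈ Shᶜ, ‖h i‖ ≤ ‖h j₀‖ := fun i hi =>
    hShsep j₀ hj₀ i (Finset.mem_compl.mp hi)
  have hμeb : ∀ i ∈ Teᶜ, ‖e i‖ ≤ ‖e i₀‖ := fun i hi =>
    hTesep i₀ hi₀ i (Finset.mem_compl.mp hi)
  obtain ⟨Lh, hLhprop, hLhsum, hLhineq⟩ := tail_partition h s hs Shᶜ ‖h j₀‖ hμh0 hμhb
  obtain ⟨Le, hLeprop, hLesum, hLeineq⟩ := tail_partition e k hk Teᶜ ‖e i₀‖ hμe0 hμeb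
  -- bound √s μh ≤ ah
  have hμha : Real.sqrt (s:ℝ) * ‖h j₀‖ ≤ ah := by
    refine sq_le_of_sq (by positivity) hah0 ?_
    have hsum : (Sh.card : ℝ) * ‖h j₀‖^2 ≤ ∑ i ∈ Sh, ‖h i‖^2 := by
      rw [← nsmul_eq_mul]
      refine Finset.card_nsmul_le_sum _ _ _ fun i hi => ?_
      have := hj₀min i hi
      nlinarith [norm_nonneg (h i)]
    rw [hahdef, l2norm_restr_sq]
    have hcs : (Sh.card : ℝ) = (s:ℝ) := by exact_mod_cast hShcard'
    rw [hcs] at hsum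
    have hsq : (Real.sqrt (s:ℝ))^2 = (s:ℝ) := Real.sq_sqrt (by positivity)
    nlinarith [hsum, hsq]
  have hμea : Real.sqrt (k:ℝ) * ‖e i₀‖ ≤ ae := by
    refine sq_le_of_sq (by positivity) hae0 ?_
    have hsum : (Te.card : ℝ) * ‖e i₀‖^2 ≤ ∑ i ∈ Te, ‖e i‖^2 := by
      rw [← nsmul_eq_mul]
      refine Finset.card_nsmul_le_sum _ _ _ fun i hi => ?_
      have := hi₀min i hi
      nlinarith [norm_nonneg (e i)]
    rw [haedef, l2norm_restr_sq]
    have hcs : (Te.card : ℝ) = (k:ℝ) := by exact_mod_cast hTecard'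
    rw [hcs] at hsum
    have hsq : (Real.sqrt (k:ℝ))^2 = (k:ℝ) := Real.sq_sqrt (by positivity)
    nlinarith [hsum, hsq]
  set Wh := (Lh.map (fun B => l2norm (restr h B))).sum with hWhdef
  set We := (Le.map (fun C => l2norm (restr e C))).sum with hWedef
  have hWh0 : 0 ≤ Wh := List.sum_nonneg (by
    intro x hx
    simp only [List.mem_map] at hx
    obtain ⟨B, _, rfl⟩ := hx
    exact l2norm_nonneg _)
  have hWe0 : 0 ≤ We := List.sum_nonneg (by
    intro x hx
    simp only [List.mem_map] at hx
    obtain ⟨C, _, rfl⟩ := hx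
    exact l2norm_nonneg _)
  set W := Wh + We with hWdef
  have hW0 : 0 ≤ W := add_nonneg hWh0 hWe0
  -- W bound
  have hWb : W ≤ R / Real.sqrt (s:ℝ) + Real.sqrt 2 * a / 4 := by
    have e1 : ∑ i ∈ Shᶜ, ‖h i‖ = l1norm (restr h Shᶜ) := (l1norm_restr h Shᶜ).symm
    have e2 : ∑ i ∈ Teᶜ, ‖e i‖ = l1norm (restr e Teᶜ) := (l1norm_restr e Teᶜ).symm
    rw [e1] at hLhineq
    rw [e2] at hLeineq
    have hWhb : Wh ≤ l1norm (restr h Shᶜ) / Real.sqrt (s:ℝ) + ah / 4 := by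
      have : Real.sqrt (s:ℝ) * ‖h j₀‖ / 4 ≤ ah / 4 := by linarith
      calc Wh ≤ l1norm (restr h Shᶜ) / Real.sqrt (s:ℝ)
            + Real.sqrt (s:ℝ) * ‖h j₀‖ / 4 := hLhineq
        _ ≤ _ := by linarith
    have hWeb : We ≤ lam * l1norm (restr e Teᶜ) / Real.sqrt (s:ℝ) + ae / 4 := by
      have hconv : l1norm (restr e Teᶜ) / Real.sqrt (k:ℝ)
          = lam * l1norm (restr e Teᶜ) / Real.sqrt (s:ℝ) := by
        rw [div_eq_div_iff hrkpos.ne' hrspos.ne']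
        rw [mul_comm lam (l1norm (restr e Teᶜ)), mul_assoc, sqrt_lam_mul hk]
      have : Real.sqrt (k:ℝ) * ‖e i₀‖ / 4 ≤ ae / 4 := by linarith
      calc We ≤ l1norm (restr e Teᶜ) / Real.sqrt (k:ℝ)
            + Real.sqrt (k:ℝ) * ‖e i₀‖ / 4 := hLeineq
        _ = lam * l1norm (restr e Teᶜ) / Real.sqrt (s:ℝ)
            + Real.sqrt (k:ℝ) * ‖e i₀‖ / 4 := by rw [hconv]
        _ ≤ _ := by linarith
    have hsum2 : ah + ae ≤ Real.sqrt 2 * a := by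
      rw [hadef, ha2def]
      exact sum_two_le_sqrt2 hah0 hae0
    have hRsplit : R / Real.sqrt (s:ℝ)
        = l1norm (restr h Shᶜ) / Real.sqrt (s:ℝ)
          + lam * l1norm (restr e Teᶜ) / Real.sqrt (s:ℝ) := by
      rw [hRdef, add_div]
    rw [hWdef, hRsplit]
    linarith
  -- κ and the inner product bounds
  set p1 := P^2 - (1-δ)*a2 with hp1def
  set q1 := (1+δ)*a2 - P^2 with hq1def
  have hp1n : 0 ≤ p1 := by rw [hp1def]; rw [← hasq]; linarith
  have hq1n : 0 ≤ q1 := by rw [hq1def]; rw [← hasq]; linarith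
  set κ := Real.sqrt (p1*q1) / a with hκdef
  have hκ0 : 0 ≤ κ := div_nonneg (Real.sqrt_nonneg _) hapos.le
  have hκsq : κ^2 * a^2 = p1 * q1 := by
    rw [hκdef, div_pow, Real.sq_sqrt (mul_nonneg hp1n hq1n)]
    field_simp
  -- cross bounds for h blocks
  have hcrossh : ∀ B ∈ Lh,
      -(κ * l2norm (restr h B)) ≤
        ((inner ℂ (toE Bu) (toE (A.mulVec (restr h B))) : ℂ)).re := by
    intro B hB
    obtain ⟨hBcard, hBsub⟩ := hLhprop B hB
    have hdx : ∀ i, restr h Sh i = 0 ∨ restr h B i = 0 := by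
      intro i
      by_cases hi : i ∈ Sh
      · right
        have : i ∉ B := fun hmem => (Finset.mem_compl.mp (hBsub hmem)) hi
        exact if_neg this
      · left; exact if_neg hi
    have hdc : ∀ i : Fin m, restr e Te i = 0 ∨ (0 : Fin m → ℂ) i = 0 :=
      fun i => Or.inr rfl
    have hcb := cross_bound hrip (isSparse_restr h Sh (le_of_eq hShcard'))
      (isSparse_restr h B hBcard) (isSparse_restr e Te (le_of_eq hTecard'))
      (isSparse_zero (s := k)) hdx hdc (by rw [← hahdef, ← haedef, ← ha2def]; exact ha2pos)
    rw [add_zero] at hcb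
    rw [l2norm_zero] at hcb
    set γ : ℂ := inner ℂ (toE Bu) (toE (A.mulVec (restr h B))) with hγdef
    have hcb' : ‖γ‖^2 * a2 ≤ p1*q1*(l2norm (restr h B))^2 := by
      calc ‖γ‖^2 * a2 ≤ _ := hcb
        _ = p1*q1*(l2norm (restr h B))^2 := by
          rw [hp1def, hq1def, ← hPdef, ← hahdef, ← haedef, ← ha2def]; ring
    have hκa2 : κ^2 * a2 = p1*q1 := by rw [← hasq]; exact hκsq
    have hγb : ‖γ‖ ≤ κ * l2norm (restr h B) :=
      norm_le_kappa (norm_nonneg _) (l2norm_nonneg _) hκ0 ha2pos hcb' hκa2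
    have := re_ge_neg_norm γ
    linarith
  have hcrosse : ∀ C ∈ Le,
      -(κ * l2norm (restr e C)) ≤
        ((inner ℂ (toE Bu) (toE (restr e C)) : ℂ)).re := by
    intro C hC
    obtain ⟨hCcard, hCsub⟩ := hLeprop C hC
    have hdx : ∀ i : Fin N, restr h Sh i = 0 ∨ (0 : Fin N → ℂ) i = 0 :=
      fun i => Or.inr rfl
    have hdc : ∀ i, restr e Te i = 0 ∨ restr e C i = 0 := by
      intro i
      by_cases hi : i ∈ Te
      · right
        have : i ∉ C := fun hmem => (Finset.mem_compl.mp (hCsub hmem)) hi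
        exact if_neg this
      · left; exact if_neg hi
    have hcb := cross_bound hrip (isSparse_restr h Sh (le_of_eq hShcard'))
      (isSparse_zero (s := s)) (isSparse_restr e Te (le_of_eq hTecard'))
      (isSparse_restr e C hCcard) hdx hdc (by rw [← hahdef, ← haedef, ← ha2def]; exact ha2pos)
    rw [Matrix.mulVec_zero, zero_add] at hcb
    rw [l2norm_zero] at hcb
    set γ : ℂ := inner ℂ (toE Bu) (toE (restr e C)) with hγdef
    have hcb' : ‖γ‖^2 * a2 ≤ p1*q1*(l2norm (restr e C))^2 := by
      calc ‖γ‖^2 * a2 ≤ _ := hcb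
        _ = p1*q1*(l2norm (restr e C))^2 := by
          rw [hp1def, hq1def, ← hPdef, ← hahdef, ← haedef, ← ha2def]; ring
    have hκa2 : κ^2 * a2 = p1*q1 := by rw [← hasq]; exact hκsq
    have hγb : ‖γ‖ ≤ κ * l2norm (restr e C) :=
      norm_le_kappa (norm_nonneg _) (l2norm_nonneg _) hκ0 ha2pos hcb' hκa2
    have := re_ge_neg_norm γ
    linarith
  -- decomposition of the measurement vector
  have hdecomp : A.mulVec h + e
      = Bu + ((Lh.map (fun B => A.mulVec (restr h B))).sum
          + (Le.map (fun C => restr e C)).sum) := by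
    have hh : h = restr h Sh + (Lh.map (fun B => restr h B)).sum := by
      rw [hLhsum, restr_add_compl]
    have he : e = restr e Te + (Le.map (fun C => restr e C)).sum := by
      rw [hLesum, restr_add_compl]
    calc A.mulVec h + e
        = A.mulVec (restr h Sh + (Lh.map (fun B => restr h B)).sum)
          + (restr e Te + (Le.map (fun C => restr e C)).sum) := by rw [← hh, ← he]
      _ = (A.mulVec (restr h Sh) + A.mulVec ((Lh.map (fun B => restr h B)).sum))
          + (restr e Te + (Le.map (fun C => restr e C)).sum) := by
            rw [Matrix.mulVec_add]
      _ = Bu + (A.mulVec ((Lh.map (fun B => restr h B)).sum)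
          + (Le.map (fun C => restr e C)).sum) := by
            rw [hBudef]; funext i; simp; ring
      _ = _ := by
            rw [mulVec_list_sum, List.map_map]
            rfl
  -- P^2 ≤ P*G + κ*W
  have hPG : P^2 ≤ P*G + κ*W := by
    have hself : ((inner ℂ (toE Bu) (toE Bu) : ℂ)).re = P^2 := by
      rw [hPdef, l2norm_eq_norm]
      exact_mod_cast @inner_self_eq_norm_sq ℂ _ _ _ _ (toE Bu)
    have hsumh := list_sum_re_ge Lh
      (fun B => ((inner ℂ (toE Bu) (toE (A.mulVec (restr h B))) : ℂ)).re)
      (fun B => l2norm (restr h B)) κ hcrossh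
    have hsume := list_sum_re_ge Le
      (fun C => ((inner ℂ (toE Bu) (toE (restr e C)) : ℂ)).re)
      (fun C => l2norm (restr e C)) κ hcrosse
    have hinnerfull : ((inner ℂ (toE Bu) (toE (A.mulVec h + e)) : ℂ)).re
        = P^2 + (((Lh.map (fun B => A.mulVec (restr h B))).map
            (fun v => ((inner ℂ (toE Bu) (toE v) : ℂ)))).sum.re
          + ((Le.map (fun C => restr e C)).map
            (fun v => ((inner ℂ (toE Bu) (toE v) : ℂ)))).sum.re) := by
      have e0 : toE (A.mulVec h + e)
          = toE Bu + (toE ((Lh.map (fun B => A.mulVec (restr h B))).sum)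
            + toE ((Le.map (fun C => restr e C)).sum)) := by
        rw [hdecomp]; rfl
      rw [e0, inner_add_right, inner_add_right]
      rw [inner_list_sum, inner_list_sum]
      simp only [Complex.add_re]
      rw [hself]
    have hre1 : (((Lh.map (fun B => A.mulVec (restr h B))).map
        (fun v => ((inner ℂ (toE Bu) (toE v) : ℂ)))).sum.re)
        = (Lh.map (fun B => ((inner ℂ (toE Bu) (toE (A.mulVec (restr h B))) : ℂ)).re)).sum := by
      rw [list_re_sum, List.map_map, List.map_map]
      rfl
    have hre2 : (((Le.map (fun C => restr e C)).map
        (fun v => ((inner ℂ (toE Bu) (toE v) : ℂ)))).sum.re)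
        = (Le.map (fun C => ((inner ℂ (toE Bu) (toE (restr e C)) : ℂ)).re)).sum := by
      rw [list_re_sum, List.map_map, List.map_map]
      rfl
    have hCS : ((inner ℂ (toE Bu) (toE (A.mulVec h + e)) : ℂ)).re ≤ P * G := by
      calc ((inner ℂ (toE Bu) (toE (A.mulVec h + e)) : ℂ)).re
          ≤ ‖(inner ℂ (toE Bu) (toE (A.mulVec h + e)) : ℂ)‖ := by
            exact Complex.re_le_norm _
        _ ≤ ‖toE Bu‖ * ‖toE (A.mulVec h + e)‖ := norm_inner_le_norm _ _
        _ = P * G := by rw [← l2norm_eq_norm, ← l2norm_eq_norm, ← hPdef, ← hGdef]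
    rw [hinnerfull, hre1, hre2] at hCS
    have e1 : κ*W = κ*((Lh.map (fun B => l2norm (restr h B))).sum)
        + κ*((Le.map (fun C => l2norm (restr e C))).sum) := by
      rw [hWdef, hWhdef, hWedef]; ring
    linarith [hCS, hsumh, hsume, e1]
  -- master inequality
  have h4m : κ^2*a^2 ≤ (P^2 - (1-δ)*a^2) * ((1+δ)*a^2 - P^2) := by
    rw [hasq, ← hp1def, ← hq1def]
    have hh := hκsq
    rw [hasq] at hh
    exact le_of_eq hh
  have hmaster := master_real δ a P G W κ hδ0 hδ1 hapos hG0 hW0 hκ0 hP0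
    hP1 hP2 hPG h4m
  -- combine
  have hcore : a * D ≤ G + (δ / Real.sqrt (1+δ)) * (R / Real.sqrt (s:ℝ)) := by
    have hq0 : 0 ≤ δ / Real.sqrt (1+δ) := div_nonneg hδ0 hr2pos.le
    have hWmono := mul_le_mul_of_nonneg_left hWb hq0
    rw [hDdef]
    have hexp : (Real.sqrt (1-δ) - Real.sqrt 2 * δ / (4 * Real.sqrt (1+δ))) * a
        = Real.sqrt (1-δ) * a - (δ / Real.sqrt (1+δ)) * (Real.sqrt 2 * a / 4) := by
      field_simp
    have hWexp : (δ / Real.sqrt (1+δ)) * (R / Real.sqrt (s:ℝ) + Real.sqrt 2 * a / 4)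
        = (δ / Real.sqrt (1+δ)) * (R / Real.sqrt (s:ℝ))
          + (δ / Real.sqrt (1+δ)) * (Real.sqrt 2 * a / 4) := by ring
    rw [mul_comm, hexp]
    rw [hWexp] at hWmono
    linarith [hmaster, hWmono]
  have hafin : a ≤ (G + (δ / Real.sqrt (1+δ)) * (R / Real.sqrt (s:ℝ))) / D := by
    rw [le_div_iff₀ hD]
    exact hcore
  have hLHS2 : l1norm (restr h S) + lam * l1norm (restr e T)
      ≤ Real.sqrt (2*(s:ℝ)) * a := by
    have hsum2 : ah + ae ≤ Real.sqrt 2 * a := by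
      rw [hadef, ha2def]
      exact sum_two_le_sqrt2 hah0 hae0
    have h2s : Real.sqrt (2*(s:ℝ)) = Real.sqrt 2 * Real.sqrt (s:ℝ) :=
      Real.sqrt_mul (by norm_num) _
    calc l1norm (restr h S) + lam * l1norm (restr e T)
        ≤ Real.sqrt (s:ℝ) * (ah + ae) := hL1
      _ ≤ Real.sqrt (s:ℝ) * (Real.sqrt 2 * a) :=
          mul_le_mul_of_nonneg_left hsum2 hrspos.le
      _ = Real.sqrt (2*(s:ℝ)) * a := by rw [h2s]; ring
  have hfinal : l1norm (restr h S) + lam * l1norm (restr e T)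
      ≤ (Real.sqrt 2 * δ / (Real.sqrt (1+δ) * D)) * R
        + (Real.sqrt (2*(s:ℝ)) / D) * G := by
    have h2s : Real.sqrt (2*(s:ℝ)) = Real.sqrt 2 * Real.sqrt (s:ℝ) :=
      Real.sqrt_mul (by norm_num) _
    have hstep := mul_le_mul_of_nonneg_left hafin (Real.sqrt_nonneg (2*(s:ℝ)))
    have heq : Real.sqrt (2*(s:ℝ))
        * ((G + (δ / Real.sqrt (1+δ)) * (R / Real.sqrt (s:ℝ))) / D)
        = (Real.sqrt 2 * δ / (Real.sqrt (1+δ) * D)) * R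
          + (Real.sqrt (2*(s:ℝ)) / D) * G := by
      rw [h2s]
      field_simp
      ring
    rw [heq] at hstep
    exact le_trans hLHS2 hstep
  refine le_trans hfinal ?_
  refine add_le_add ?_ le_rfl
  exact mul_le_mul_of_nonneg_left hRmono hρ0

end SC
namespace SC

lemma sq_lt_of_sq {x y : ℝ} (hx : 0 ≤ x) (hy : 0 ≤ y) (h : x^2 < y^2) : x < y := by
  nlinarith [sq_nonneg (x + y), sq_nonneg (x - y)]

lemma l2norm_sub_le {n : ℕ} (p q : Fin n → ℂ) :
    l2norm (p - q) ≤ l2norm p + l2norm q := by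
  rw [l2norm_eq_norm, l2norm_eq_norm, l2norm_eq_norm]
  have : toE (p - q) = toE p - toE q := rfl
  rw [this]
  exact norm_sub_le _ _

lemma cone_lower {n : ℕ} (x d : Fin n → ℂ) (S : Finset (Fin n)) :
    l1norm (restr x S) - l1norm (restr d S)
      + (l1norm (restr d Sᶜ) - l1norm (restr x Sᶜ)) ≤ l1norm (x - d) := by
  rw [l1norm_split (x - d) S, l1norm_restr, l1norm_restr, l1norm_restr,
    l1norm_restr, l1norm_restr, l1norm_restr]
  have h1 : ∑ i ∈ S, ‖x i‖ - ∑ i ∈ S, ‖d i‖ ≤ ∑ i ∈ S, ‖(x - d) i‖ := by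
    rw [← Finset.sum_sub_distrib]
    refine Finset.sum_le_sum fun i _ => ?_
    have := norm_sub_norm_le (x i) (d i)
    simpa using this
  have h2 : ∑ i ∈ Sᶜ, ‖d i‖ - ∑ i ∈ Sᶜ, ‖x i‖ ≤ ∑ i ∈ Sᶜ, ‖(x - d) i‖ := by
    rw [← Finset.sum_sub_distrib]
    refine Finset.sum_le_sum fun i _ => ?_
    have h3 := norm_sub_norm_le (d i) (x i)
    have h4 : ‖d i - x i‖ = ‖(x - d) i‖ := by
      rw [norm_sub_rev]; rfl
    rw [h4] at h3
    exact h3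
  linarith

lemma sigma1_ge {n : ℕ} (x : Fin n → ℂ) (s : ℕ) {V : Finset (Fin n)}
    (hVcard : s ≤ V.card) (hsep : ∀ i ∈ V, ∀ j ∉ V, ‖x j‖ ≤ ‖x i‖) :
    l1norm (restr x Vᶜ) ≤ sigma1 s x := by
  refine le_csInf ⟨l1norm (x - 0), 0, isSparse_zero, rfl⟩ ?_
  rintro t ⟨z, ⟨Z, hZcard, hZzero⟩, rfl⟩
  have h1 : l1norm (restr x Zᶜ) ≤ l1norm (x - z) := by
    rw [l1norm_restr, l1norm]
    calc ∑ i ∈ Zᶜ, ‖x i‖ = ∑ i ∈ Zᶜ, ‖(x - z) i‖ := by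
          refine Finset.sum_congr rfl fun i hi => ?_
          have : z i = 0 := hZzero i (Finset.mem_compl.mp hi)
          simp [this]
      _ ≤ ∑ i, ‖(x - z) i‖ :=
          Finset.sum_le_sum_of_subset_of_nonneg (Finset.subset_univ _)
            (fun i _ _ => norm_nonneg _)
  have h2 : l1norm (restr x Vᶜ) ≤ l1norm (restr x Zᶜ) :=
    l1norm_restr_compl_mono x (le_trans hZcard hVcard) hsep
  linarith

end SC


open SC

/-- ℓ¹ recovery estimate with the theoretically optimal weight λ = √(s/k),
under δ_{2s,2k} < √(8/33), with constants depending only on δ. -/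
theorem l1_recovery_optimal_lambda (δ : ℝ) (hδ0 : 0 ≤ δ) (hδ : δ < Real.sqrt (8 / 33)) :
    ∃ C₁ C₂ : ℝ, 0 < C₁ ∧ 0 < C₂ ∧
      ∀ (N m s k : ℕ), 1 ≤ s → s ≤ N → 1 ≤ k → k ≤ m → m ≤ N →
        ∀ A : Matrix (Fin m) (Fin N) ℂ, RIPCor A (2 * s) (2 * k) δ →
          ∀ (x : Fin N → ℂ) (c y : Fin m → ℂ) (ε : ℝ), 0 < ε →
            l2norm (A.mulVec x + c - y) ≤ ε →
            ∀ (xh : Fin N → ℂ) (ch : Fin m → ℂ),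
              IsMinimizer A y (Real.sqrt ((s : ℝ) / k)) ε xh ch →
              l1norm (x - xh) + Real.sqrt ((s : ℝ) / k) * l1norm (c - ch) ≤
                C₁ * (sigma1 s x + Real.sqrt ((s : ℝ) / k) * sigma1 k c) +
                  C₂ * Real.sqrt (2 * (s : ℝ)) * ε := by
  have hδsq : δ^2 < 8/33 := by
    have h833 : (Real.sqrt (8/33))^2 = 8/33 := Real.sq_sqrt (by norm_num)
    nlinarith [hδ, hδ0, Real.sqrt_nonneg (8/33 : ℝ)]
  have hδ1 : δ < 1 := by nlinarith
  have hr1pos : 0 < Real.sqrt (1-δ) := Real.sqrt_pos.mpr (by linarith)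
  have hr2pos : 0 < Real.sqrt (1+δ) := Real.sqrt_pos.mpr (by linarith)
  have hr1sq : (Real.sqrt (1-δ))^2 = 1-δ := Real.sq_sqrt (by linarith)
  have hr2sq : (Real.sqrt (1+δ))^2 = 1+δ := Real.sq_sqrt (by linarith)
  have hs2sq : (Real.sqrt 2)^2 = 2 := Real.sq_sqrt (by norm_num)
  have hs2pos : 0 < Real.sqrt 2 := Real.sqrt_pos.mpr (by norm_num)
  have hkey : (5*Real.sqrt 2/4)*δ < Real.sqrt (1-δ) * Real.sqrt (1+δ) := by
    refine sq_lt_of_sq (by positivity) (by positivity) ?_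
    have : ((5*Real.sqrt 2/4)*δ)^2 = 25/8*δ^2 := by
      rw [mul_pow, div_pow, mul_pow, hs2sq]; ring
    rw [this, mul_pow, hr1sq, hr2sq]
    nlinarith
  set D := Real.sqrt (1-δ) - Real.sqrt 2 * δ / (4 * Real.sqrt (1+δ)) with hDdef
  have hD : 0 < D := by
    rw [hDdef, sub_pos, div_lt_iff₀ (by positivity)]
    have h1 : Real.sqrt 2 * δ ≤ (5*Real.sqrt 2/4)*δ := by nlinarith
    nlinarith [mul_pos hr1pos hr2pos]
  set ρ := Real.sqrt 2 * δ / (Real.sqrt (1+δ) * D) with hρdef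
  have hρ0 : 0 ≤ ρ := div_nonneg (by positivity) (by positivity)
  clear_value D
  have hρ1 : ρ < 1 := by
    rw [hρdef, div_lt_one (by positivity)]
    have e : Real.sqrt (1+δ) * D
        = Real.sqrt (1-δ) * Real.sqrt (1+δ) - Real.sqrt 2 * δ/4 := by
      rw [hDdef]
      field_simp
    rw [e]
    nlinarith
  clear_value ρ
  have hρ1' : 0 < 1 - ρ := by linarith
  refine ⟨(2+2*ρ)/(1-ρ), 4/((1-ρ)*D), div_pos (by linarith) hρ1',
    div_pos (by norm_num) (mul_pos hρ1' hD), ?_⟩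
  intro N m s k hs hsN hk hkm hmN A hrip x c y ε hε hfeas xh ch hmin
  set lam := Real.sqrt ((s:ℝ)/k) with hlamdef
  have hlam0 : 0 ≤ lam := Real.sqrt_nonneg _
  -- top sets of x and c
  obtain ⟨Sx, hSxsub, hSxcard, hSxsep'⟩ := exists_top_subset (fun i => ‖x i‖) s Finset.univ
  have hSxcard' : Sx.card = s := by
    rw [hSxcard, Finset.card_univ, Fintype.card_fin]; omega
  have hSxsep : ∀ i ∈ Sx, ∀ j ∉ Sx, ‖x j‖ ≤ ‖x i‖ := fun i hi j hj =>
    hSxsep' i hi j (Finset.mem_sdiff.mpr ⟨Finset.mem_univ _, hj⟩)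
  obtain ⟨Tc, hTcsub, hTccard, hTcsep'⟩ := exists_top_subset (fun i => ‖c i‖) k Finset.univ
  have hTccard' : Tc.card = k := by
    rw [hTccard, Finset.card_univ, Fintype.card_fin]; omega
  have hTcsep : ∀ i ∈ Tc, ∀ j ∉ Tc, ‖c j‖ ≤ ‖c i‖ := fun i hi j hj =>
    hTcsep' i hi j (Finset.mem_sdiff.mpr ⟨Finset.mem_univ _, hj⟩)
  -- error vectors
  set dx := x - xh with hdxdef
  set dc := c - ch with hdcdef
  set L := l1norm (restr dx Sx) + lam * l1norm (restr dc Tc) with hLdef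
  set Rr := l1norm (restr dx Sxᶜ) + lam * l1norm (restr dc Tcᶜ) with hRrdef
  set G := l2norm (A.mulVec dx + dc) with hGdef
  set σb := l1norm (restr x Sxᶜ) + lam * l1norm (restr c Tcᶜ) with hσbdef
  clear_value lam dx dc L Rr G σb
  have hσb0 : 0 ≤ σb := by
    rw [hσbdef]
    exact add_nonneg (l1norm_nonneg _) (mul_nonneg hlam0 (l1norm_nonneg _))
  -- (i) RNSP
  have h1 : L ≤ ρ * Rr + (Real.sqrt (2*(s:ℝ))/D) * G := by
    have hr := rnsp hs hsN hk hkm hδ0 hδ1 hrip (by rw [← hDdef]; exact hD) dx dc Sx Tc (le_of_eq hSxcard')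
      (le_of_eq hTccard')
    rw [hLdef, hRrdef, hGdef, hρdef, hDdef, hlamdef]
    exact hr
  -- (ii) G ≤ 2ε
  have h2 : G ≤ 2*ε := by
    have heq : A.mulVec dx + dc
        = (A.mulVec x + c - y) - (A.mulVec xh + ch - y) := by
      rw [hdxdef, hdcdef, Matrix.mulVec_sub]
      funext i
      simp only [Pi.add_apply, Pi.sub_apply]
      ring
    rw [hGdef, heq]
    calc l2norm ((A.mulVec x + c - y) - (A.mulVec xh + ch - y))
        ≤ l2norm (A.mulVec x + c - y) + l2norm (A.mulVec xh + ch - y) :=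
          l2norm_sub_le _ _
      _ ≤ ε + ε := add_le_add hfeas hmin.1
      _ = 2*ε := by ring
  -- (iii) cone constraint
  have h3 : Rr ≤ L + 2*σb := by
    have hminim := hmin.2 x c hfeas
    have hxh : xh = x - dx := by rw [hdxdef]; ring
    have hch : ch = c - dc := by rw [hdcdef]; ring
    rw [hxh, hch] at hminim
    have hcx := cone_lower x dx Sx
    have hcc := mul_le_mul_of_nonneg_left (cone_lower c dc Tc) hlam0
    have hccexp : lam * (l1norm (restr c Tc) - l1norm (restr dc Tc)
        + (l1norm (restr dc Tcᶜ) - l1norm (restr c Tcᶜ)))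
        = lam * l1norm (restr c Tc) - lam * l1norm (restr dc Tc)
          + (lam * l1norm (restr dc Tcᶜ) - lam * l1norm (restr c Tcᶜ)) := by ring
    rw [hccexp] at hcc
    have hsx := l1norm_split x Sx
    have hsc := l1norm_split c Tc
    have hsc2 : lam * l1norm c
        = lam * l1norm (restr c Tc) + lam * l1norm (restr c Tcᶜ) := by
      rw [hsc]; ring
    rw [hRrdef, hLdef, hσbdef]
    linarith [hminim, hcx, hcc, hsx, hsc2]
  -- (iv) sigma bound
  have h4 : σb ≤ sigma1 s x + lam * sigma1 k c := by
    rw [hσbdef]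
    refine add_le_add (sigma1_ge x s (le_of_eq hSxcard'.symm) hSxsep) ?_
    exact mul_le_mul_of_nonneg_left (sigma1_ge c k (le_of_eq hTccard'.symm) hTcsep) hlam0
  -- assemble
  have hL0 : 0 ≤ L := by
    rw [hLdef]
    exact add_nonneg (l1norm_nonneg _) (mul_nonneg hlam0 (l1norm_nonneg _))
  have hRr0 : 0 ≤ Rr := by
    rw [hRrdef]
    exact add_nonneg (l1norm_nonneg _) (mul_nonneg hlam0 (l1norm_nonneg _))
  have hτ0 : 0 ≤ Real.sqrt (2*(s:ℝ))/D := div_nonneg (Real.sqrt_nonneg _) hD.le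
  have h5 : ρ * Rr ≤ ρ * (L + 2*σb) := mul_le_mul_of_nonneg_left h3 hρ0
  have h5e : ρ * (L + 2*σb) = ρ*L + 2*(ρ*σb) := by ring
  rw [h5e] at h5
  have h6 : (1-ρ)*L ≤ 2*ρ*σb + (Real.sqrt (2*(s:ℝ))/D) * G := by linarith [h1, h5]
  have h7 : (Real.sqrt (2*(s:ℝ))/D) * G ≤ (Real.sqrt (2*(s:ℝ))/D) * (2*ε) :=
    mul_le_mul_of_nonneg_left h2 hτ0
  have htotal : l1norm dx + lam * l1norm dc = L + Rr := by
    rw [hLdef, hRrdef, l1norm_split dx Sx, l1norm_split dc Tc]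
    ring
  have h8 : (1-ρ) * (l1norm dx + lam * l1norm dc)
      ≤ (2+2*ρ)*σb + 2*(Real.sqrt (2*(s:ℝ))/D)*(2*ε) := by
    have e1 : (1-ρ) * (l1norm dx + lam * l1norm dc) = (1-ρ)*(L + Rr) := by
      rw [htotal]
    rw [e1]
    have h1ρ0 : (0:ℝ) ≤ 1 - ρ := by linarith
    have h3' := mul_le_mul_of_nonneg_left h3 h1ρ0
    have h3'e : (1-ρ) * (L + 2*σb) = (1-ρ)*L + 2*((1-ρ)*σb) := by ring
    rw [h3'e] at h3'
    linarith [h6, h7, h3']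
  have hσp0 : 0 ≤ sigma1 s x + lam * sigma1 k c := le_trans hσb0 h4
  have h9 : (1-ρ) * (l1norm dx + lam * l1norm dc)
      ≤ (2+2*ρ)*(sigma1 s x + lam * sigma1 k c)
        + 2*(Real.sqrt (2*(s:ℝ))/D)*(2*ε) := by
    have := mul_le_mul_of_nonneg_left h4 (by linarith : (0:ℝ) ≤ 2+2*ρ)
    linarith
  have h1ρ : 0 < 1 - ρ := by linarith
  have h10 : l1norm dx + lam * l1norm dc
      ≤ ((2+2*ρ)*(sigma1 s x + lam * sigma1 k c)
        + 2*(Real.sqrt (2*(s:ℝ))/D)*(2*ε)) / (1-ρ) := by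
    rw [le_div_iff₀ h1ρ]
    calc (l1norm dx + lam * l1norm dc) * (1-ρ)
        = (1-ρ) * (l1norm dx + lam * l1norm dc) := by ring
      _ ≤ _ := h9
  refine le_trans h10 ?_
  have heq : ((2+2*ρ)*(sigma1 s x + lam * sigma1 k c)
        + 2*(Real.sqrt (2*(s:ℝ))/D)*(2*ε)) / (1-ρ)
      = (2+2*ρ)/(1-ρ) * (sigma1 s x + lam * sigma1 k c)
        + 4/((1-ρ)*D) * Real.sqrt (2*(s:ℝ)) * ε := by
    field_simp
    ring
  rw [heq]
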